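/- There exists a constant c > 0 such that for every integer n ≥ 2 the following holds. Let d be the comb leaf metric on {1,…,n} with parameter M = n. If G is a simple graph on {1,…,n} that is a 2-spanner of ({1,…,n}, d), i.e., with each edge {x,y} of length d(x,y) the walk-distance satisfies d_G(x,y) ≤ 2·d(x,y) for all x,y, then G has at least c·n·log₂ n edges. -/
import Mathlib


open scoped ENNReal

/-- The total length of a walk with respect to an edge-length function. -/
noncomputable def walkLen {V : Type*} {G : SimpleGraph V} {x y : V}
    (len : V → V → ℝ≥0∞) (p : G.Walk x y) : ℝ≥0∞ :=
  (p.darts.map (fun d => len d.toProd.1 d.toProd.2)).sum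

/-- Walk-distance in a graph with edge lengths: the infimum over walks of the total
length (`∞` if no walk exists). -/
noncomputable def gdist {V : Type*} (G : SimpleGraph V) (len : V → V → ℝ≥0∞)
    (x y : V) : ℝ≥0∞ :=
  ⨅ p : G.Walk x y, walkLen len p

/-- The comb leaf metric on `{1,…,n}` with parameter `M`:
`d(i,j) = 2M + |i−j|` for `i ≠ j`, and `d(i,i) = 0`. -/
def combLeafD (n M : ℕ) (i j : Fin n) : ℝ :=
  if i = j then 0 else 2 * M + |(i.val : ℝ) - (j.val : ℝ)|

/-- Natural-number length of an (unordered) pair of indices. -/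
def lenE {n : ℕ} : Sym2 (Fin n) → ℕ :=
  Sym2.lift ⟨fun a b => (a.val - b.val) + (b.val - a.val), fun a b => by dsimp only; omega⟩

@[simp] lemma lenE_mk {n : ℕ} (a b : Fin n) :
    lenE s(a, b) = (a.val - b.val) + (b.val - a.val) := rfl

lemma abs_natCast_sub (x y : ℕ) :
    |(x : ℝ) - (y : ℝ)| = (((x - y) + (y - x) : ℕ) : ℝ) := by
  rcases le_total x y with h | h
  · rw [abs_of_nonpos (by exact sub_nonpos.mpr (by exact_mod_cast h)),
      Nat.sub_eq_zero_of_le h, zero_add, Nat.cast_sub h]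
    ring
  · rw [abs_of_nonneg (by exact sub_nonneg.mpr (by exact_mod_cast h)),
      Nat.sub_eq_zero_of_le h, add_zero, Nat.cast_sub h]

lemma combLeafD_eq {n M : ℕ} {i j : Fin n} (h : i ≠ j) :
    combLeafD n M i j = 2 * M + (((i.val - j.val) + (j.val - i.val) : ℕ) : ℝ) := by
  rw [combLeafD, if_neg h, abs_natCast_sub]

/-- Key combinatorial consequence of the 2-spanner property: for each pair `i < j`
at index-distance `D`, the graph has an edge incident to `i` or `j` whose
index-length `L` satisfies `D ≤ 2L` and `L < 2D`. -/
lemma keyB {n : ℕ} (hn : 2 ≤ n) {G : SimpleGraph (Fin n)}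
    (H : ∀ x y : Fin n,
        gdist G (fun a b => ENNReal.ofReal (combLeafD n n a b)) x y ≤
          ENNReal.ofReal (2 * combLeafD n n x y))
    (i j : Fin n) (hij : i.val < j.val) :
    ∃ e ∈ G.edgeSet, (i ∈ e ∨ j ∈ e) ∧
      j.val - i.val ≤ 2 * lenE e ∧ lenE e < 2 * (j.val - i.val) := by
  classical
  set len : Fin n → Fin n → ℝ≥0∞ := fun a b => ENNReal.ofReal (combLeafD n n a b) with hlen
  set D : ℕ := j.val - i.val with hD
  have hD1 : 1 ≤ D := by omega
  have hDn : D + 1 ≤ n := by have := j.isLt; omega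
  have hne : i ≠ j := fun h => by rw [h] at hij; omega
  have hcomb : combLeafD n n i j = 2 * n + (D : ℝ) := by
    rw [combLeafD_eq hne]
    congr 2
    omega
  -- the walk-distance is strictly below 4n + 2D + 1
  have h1 : gdist G len i j < ENNReal.ofReal (4 * n + 2 * D + 1) := by
    refine lt_of_le_of_lt (H i j) ?_
    rw [hcomb]
    rw [ENNReal.ofReal_lt_ofReal_iff (by positivity)]
    push_cast
    linarith
  rw [gdist] at h1
  obtain ⟨p, hp⟩ := iInf_lt_iff.mp h1
  -- each dart contributes at least 2n+1
  have hterm : ∀ x ∈ p.darts.map (fun d => len d.toProd.1 d.toProd.2),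
      ENNReal.ofReal (2 * n + 1) ≤ x := by
    intro x hx
    obtain ⟨d, _, rfl⟩ := List.mem_map.mp hx
    have hadj := d.adj
    have hne' : d.toProd.1 ≠ d.toProd.2 := hadj.ne
    have hvne : d.toProd.1.val ≠ d.toProd.2.val := fun h => hne' (Fin.val_injective h)
    simp only [hlen]
    apply ENNReal.ofReal_le_ofReal
    rw [combLeafD_eq hne']
    have h1 : (1 : ℝ) ≤ (((d.toProd.1.val - d.toProd.2.val) +
        (d.toProd.2.val - d.toProd.1.val) : ℕ) : ℝ) := by
      exact_mod_cast (by omega : 1 ≤ (d.toProd.1.val - d.toProd.2.val) +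
        (d.toProd.2.val - d.toProd.1.val))
    linarith
  have hlb : (p.length : ℝ≥0∞) * ENNReal.ofReal (2 * n + 1) ≤ walkLen len p := by
    have := List.card_nsmul_le_sum (p.darts.map (fun d => len d.toProd.1 d.toProd.2))
      (ENNReal.ofReal (2 * n + 1)) hterm
    rw [walkLen]
    simpa [nsmul_eq_mul, SimpleGraph.Walk.length_darts] using this
  have hlen2 : p.length ≤ 2 := by
    by_contra hc
    have h3 : (3 : ℝ≥0∞) ≤ (p.length : ℝ≥0∞) := by exact_mod_cast (by omega : 3 ≤ p.length)
    have h4 : ENNReal.ofReal (3 * (2 * n + 1)) ≤ walkLen len p := by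
      rw [ENNReal.ofReal_mul (by norm_num)]
      calc ENNReal.ofReal 3 * ENNReal.ofReal (2 * n + 1)
          ≤ (p.length : ℝ≥0∞) * ENNReal.ofReal (2 * n + 1) := by
            apply mul_le_mul' _ le_rfl
            rw [show ENNReal.ofReal 3 = ((3:ℕ) : ℝ≥0∞) by norm_num]
            exact h3
        _ ≤ walkLen len p := hlb
    have h5 : ENNReal.ofReal (3 * (2 * n + 1)) < ENNReal.ofReal (4 * n + 2 * D + 1) :=
      lt_of_le_of_lt h4 hp
    rw [ENNReal.ofReal_lt_ofReal_iff (by positivity)] at h5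
    have hDle : (D : ℝ) ≤ (n : ℝ) - 1 := by
      have : D + 1 ≤ n := hDn
      have := (Nat.cast_le (α := ℝ)).mpr this
      push_cast at this
      linarith
    linarith
  -- case analysis on the walk
  cases p with
  | nil => exact absurd rfl hne
  | cons h q =>
    rename_i k
    cases q with
    | nil =>
      -- direct edge i-j
      refine ⟨s(i, j), G.mem_edgeSet.mpr h, Or.inl (Sym2.mem_mk_left _ _), ?_, ?_⟩
      · simp only [lenE_mk]; omega
      · simp only [lenE_mk]; omega
    | cons h' r =>
      rename_i m
      cases r with
      | cons h'' r' =>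
        simp [SimpleGraph.Walk.length_cons] at hlen2
      | nil =>
        -- two-edge path i - k - j
        have hik : i ≠ k := h.ne
        have hkj : k ≠ j := h'.ne
        have hwl : walkLen len (SimpleGraph.Walk.cons h (SimpleGraph.Walk.cons h'
            SimpleGraph.Walk.nil)) = len i k + len k j := by
          simp [walkLen, SimpleGraph.Walk.darts_cons, SimpleGraph.Walk.darts_nil]
        rw [hwl] at hp
        set a : ℕ := (i.val - k.val) + (k.val - i.val) with ha
        set b : ℕ := (k.val - j.val) + (j.val - k.val) with hb
        have hpk : len i k + len k j = ENNReal.ofReal ((2*n + a) + (2*n + b)) := by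
          rw [ENNReal.ofReal_add (by positivity) (by positivity)]
          simp only [hlen]
          rw [combLeafD_eq hik, combLeafD_eq hkj]
        rw [hpk, ENNReal.ofReal_lt_ofReal_iff (by positivity)] at hp
        have hab : a + b ≤ 2 * D := by
          have : ((a + b : ℕ) : ℝ) < ((2 * D + 1 : ℕ) : ℝ) := by push_cast; push_cast at hp; linarith
          have := (Nat.cast_lt (α := ℝ)).mp this
          omega
        have htri : D ≤ a + b := by omega
        have ha1 : 1 ≤ a := by
          have : i.val ≠ k.val := fun hh => hik (Fin.val_injective hh)
          omega
        have hb1 : 1 ≤ b := by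
          have : k.val ≠ j.val := fun hh => hkj (Fin.val_injective hh)
          omega
        rcases le_total a b with hcase | hcase
        · refine ⟨s(k, j), G.mem_edgeSet.mpr h', Or.inr (Sym2.mem_mk_right _ _), ?_, ?_⟩
          · simp only [lenE_mk]; omega
          · simp only [lenE_mk]; omega
        · refine ⟨s(i, k), G.mem_edgeSet.mpr h, Or.inl (Sym2.mem_mk_left _ _), ?_, ?_⟩
          · simp only [lenE_mk]; omega
          · simp only [lenE_mk]; omega

/-- Per-scale counting: at scale `D = 4^t` (with `2·4^t ≤ n`) there are at least
`(n − 4^t)/4` edges of index-length in `[D/2, 2D)`. -/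
lemma scale_card {n : ℕ} (hn : 2 ≤ n) {G : SimpleGraph (Fin n)}
    (H : ∀ x y : Fin n,
        gdist G (fun a b => ENNReal.ofReal (combLeafD n n a b)) x y ≤
          ENNReal.ofReal (2 * combLeafD n n x y))
    (Efin : Finset (Sym2 (Fin n))) (hE : ∀ e, e ∈ Efin ↔ e ∈ G.edgeSet)
    (t : ℕ) (ht : 2 * 4 ^ t ≤ n) :
    n - 4 ^ t ≤ 4 * (Efin.filter (fun e => 4 ^ t ≤ 2 * lenE e ∧ lenE e < 2 * 4 ^ t)).card := by
  classical
  set D : ℕ := 4 ^ t with hDdef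
  have hD1 : 1 ≤ D := Nat.one_le_pow _ _ (by norm_num)
  have hsel : ∀ i : ℕ, ∀ hi : i + D < n, ∃ e, e ∈ G.edgeSet ∧
      ((⟨i, lt_of_le_of_lt (Nat.le_add_right i D) hi⟩ : Fin n) ∈ e ∨
        (⟨i + D, hi⟩ : Fin n) ∈ e) ∧
      D ≤ 2 * lenE e ∧ lenE e < 2 * D := by
    intro i hi
    obtain ⟨e, he, hmem, h1, h2⟩ := keyB hn H
      (⟨i, lt_of_le_of_lt (Nat.le_add_right i D) hi⟩ : Fin n) (⟨i + D, hi⟩ : Fin n)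
      (by simpa using (by omega : i < i + D))
    refine ⟨e, he, hmem, ?_, ?_⟩
    · simp only [Fin.val_mk] at h1 ⊢; omega
    · simp only [Fin.val_mk] at h2 ⊢; omega
  set f : ℕ → Sym2 (Fin n) := fun i =>
    if h : i + D < n then (hsel i h).choose else s((⟨0, by omega⟩ : Fin n), (⟨0, by omega⟩ : Fin n))
    with hf
  have hmaps : ∀ i ∈ Finset.range (n - D), f i ∈
      Efin.filter (fun e => 4 ^ t ≤ 2 * lenE e ∧ lenE e < 2 * 4 ^ t) := by
    intro i hi
    rw [Finset.mem_range] at hi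
    have hiD : i + D < n := by omega
    rw [hf]
    simp only [dif_pos hiD]
    obtain ⟨he, _, h1, h2⟩ := (hsel i hiD).choose_spec
    rw [Finset.mem_filter]
    exact ⟨(hE _).mpr he, h1, h2⟩
  have hfib : ∀ e ∈ Efin.filter (fun e => 4 ^ t ≤ 2 * lenE e ∧ lenE e < 2 * 4 ^ t),
      ((Finset.range (n - D)).filter (fun i => f i = e)).card ≤ 4 := by
    intro e _
    induction e using Sym2.ind with
    | _ x y =>
      have hsub : (Finset.range (n - D)).filter (fun i => f i = s(x, y)) ⊆
          ({x.val, y.val, x.val - D, y.val - D} : Finset ℕ) := by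
        intro i hi
        rw [Finset.mem_filter, Finset.mem_range] at hi
        obtain ⟨hir, hfe⟩ := hi
        have hiD : i + D < n := by omega
        rw [hf] at hfe
        simp only [dif_pos hiD] at hfe
        have spec := (hsel i hiD).choose_spec
        rw [hfe] at spec
        obtain ⟨_, hmem, _, _⟩ := spec
        simp only [Sym2.mem_iff] at hmem
        simp only [Finset.mem_insert, Finset.mem_singleton]
        rcases hmem with (h | h) | (h | h) <;>
          · have hv := congrArg Fin.val h
            simp only [Fin.val_mk] at hv
            omega
      refine le_trans (Finset.card_le_card hsub) ?_
      refine le_trans (Finset.card_insert_le _ _) ?_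
      refine le_trans (Nat.add_le_add_right (Finset.card_insert_le _ _) 1) ?_
      refine le_trans (Nat.add_le_add_right (Nat.add_le_add_right
        (Finset.card_insert_le _ _) 1) 1) ?_
      simp
  have := Finset.card_le_mul_card_image_of_maps_to hmaps 4 hfib
  rwa [Finset.card_range] at this

/-- There is a constant `c > 0` such that for every `n ≥ 2`,
every simple graph on `{1,…,n}` that is a 2-spanner of the comb leaf metric with
parameter `M = n` (each edge having length equal to the metric distance of its
endpoints) has at least `c·n·log₂ n` edges. -/
theorem comb_leaf_two_spanner_lower_bound :
    ∃ c : ℝ, 0 < c ∧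
      ∀ n : ℕ, 2 ≤ n →
      ∀ G : SimpleGraph (Fin n),
        (∀ x y : Fin n,
          gdist G (fun a b => ENNReal.ofReal (combLeafD n n a b)) x y ≤
            ENNReal.ofReal (2 * combLeafD n n x y)) →
        c * n * Real.logb 2 n ≤ (G.edgeSet.ncard : ℝ) := by
  classical
  refine ⟨1 / 64, by norm_num, ?_⟩
  intro n hn G H
  have hfin : G.edgeSet.Finite := Set.toFinite _
  set Efin := hfin.toFinset with hEfin
  have hEcard : G.edgeSet.ncard = Efin.card := Set.ncard_eq_toFinset_card _ hfin
  have hE : ∀ e, e ∈ Efin ↔ e ∈ G.edgeSet := fun e => hfin.mem_toFinset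
  set T : ℕ := Nat.log 4 (n / 2) with hT
  have hpowle : 4 ^ T ≤ n / 2 := Nat.pow_log_le_self 4 (by omega)
  have hpowgt : n / 2 < 4 ^ (T + 1) := Nat.lt_pow_succ_log_self (by norm_num) _
  set S : ℕ → Finset (Sym2 (Fin n)) := fun t =>
    Efin.filter (fun e => 4 ^ t ≤ 2 * lenE e ∧ lenE e < 2 * 4 ^ t) with hS
  -- scale bounds for all t ≤ T
  have hscale : ∀ t ∈ Finset.range (T + 1), n - 4 ^ t ≤ 4 * (S t).card := by
    intro t htr
    rw [Finset.mem_range] at htr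
    have h4t : 4 ^ t ≤ 4 ^ T := Nat.pow_le_pow_right (by norm_num) (by omega)
    exact scale_card hn H Efin hE t (by omega)
  -- the S t are pairwise disjoint
  have hdisj : ∀ t₁ ∈ Finset.range (T + 1), ∀ t₂ ∈ Finset.range (T + 1),
      t₁ ≠ t₂ → Disjoint (S t₁) (S t₂) := by
    have key : ∀ t₁ t₂ : ℕ, t₁ < t₂ → Disjoint (S t₁) (S t₂) := by
      intro t₁ t₂ hlt12
      rw [Finset.disjoint_left]
      intro e h1 h2
      rw [hS, Finset.mem_filter] at h1 h2
      have h14 : 4 ^ (t₁ + 1) ≤ 4 ^ t₂ := Nat.pow_le_pow_right (by norm_num) (by omega)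
      have : 4 ^ (t₁ + 1) = 4 * 4 ^ t₁ := by ring
      omega
    intro t₁ _ t₂ _ hne
    rcases lt_or_gt_of_ne hne with h | h
    · exact key _ _ h
    · exact (key _ _ h).symm
  -- sum over scales
  have hsum1 : ∑ t ∈ Finset.range (T + 1), (S t).card ≤ Efin.card := by
    rw [← Finset.card_biUnion hdisj]
    apply Finset.card_le_card
    intro e he
    rw [Finset.mem_biUnion] at he
    obtain ⟨t, _, het⟩ := he
    rw [hS, Finset.mem_filter] at het
    exact het.1
  have hsum2 : ∑ t ∈ Finset.range (T + 1), (n - 4 ^ t) ≤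
      ∑ t ∈ Finset.range (T + 1), 4 * (S t).card :=
    Finset.sum_le_sum hscale
  have hterm : ∀ t ∈ Finset.range (T + 1), n - n / 2 ≤ n - 4 ^ t := by
    intro t htr
    rw [Finset.mem_range] at htr
    have h4t : 4 ^ t ≤ 4 ^ T := Nat.pow_le_pow_right (by norm_num) (by omega)
    omega
  have hsum3 : (T + 1) * (n - n / 2) ≤ ∑ t ∈ Finset.range (T + 1), (n - 4 ^ t) := by
    calc (T + 1) * (n - n / 2) = ∑ _t ∈ Finset.range (T + 1), (n - n / 2) := by
          rw [Finset.sum_const, Finset.card_range, smul_eq_mul]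
      _ ≤ _ := Finset.sum_le_sum hterm
  have hkey1 : (T + 1) * (n - n / 2) ≤ 4 * Efin.card := by
    calc (T + 1) * (n - n / 2) ≤ ∑ t ∈ Finset.range (T + 1), (n - 4 ^ t) := hsum3
      _ ≤ ∑ t ∈ Finset.range (T + 1), 4 * (S t).card := hsum2
      _ = 4 * ∑ t ∈ Finset.range (T + 1), (S t).card := by rw [Finset.mul_sum]
      _ ≤ 4 * Efin.card := by omega
  have hkey2 : (T + 1) * n ≤ 16 * Efin.card := by
    have hh : n ≤ 4 * (n - n / 2) := by omega
    calc (T + 1) * n ≤ (T + 1) * (4 * (n - n / 2)) := Nat.mul_le_mul_left _ hh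
      _ = 4 * ((T + 1) * (n - n / 2)) := by ring
      _ ≤ 4 * (4 * Efin.card) := Nat.mul_le_mul_left _ hkey1
      _ = 16 * Efin.card := by ring
  -- n ≤ 16^(T+1)
  have hn16 : n ≤ 16 ^ (T + 1) := by
    have h4 : 4 ≤ 4 ^ (T + 1) := by
      calc (4 : ℕ) = 4 ^ 1 := by norm_num
        _ ≤ 4 ^ (T + 1) := Nat.pow_le_pow_right (by norm_num) (by omega)
    have h42 : 4 * 4 ^ (T + 1) ≤ 16 ^ (T + 1) := by
      calc 4 * 4 ^ (T + 1) ≤ 4 ^ (T + 1) * 4 ^ (T + 1) := Nat.mul_le_mul_right _ h4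
        _ = 16 ^ (T + 1) := by rw [← Nat.mul_pow]
      -- 4^(T+1) * 4^(T+1) = (4*4)^(T+1) = 16^(T+1)
    omega
  have hlogb : Real.logb 2 n ≤ 4 * ((T : ℝ) + 1) := by
    calc Real.logb 2 n ≤ Real.logb 2 ((16 : ℝ) ^ (T + 1)) := by
          apply Real.logb_le_logb_of_le (by norm_num) (by positivity)
          exact_mod_cast hn16
      _ = (T + 1 : ℕ) * Real.logb 2 16 := Real.logb_pow 2 16 (T + 1)
      _ = 4 * ((T : ℝ) + 1) := by
          have : Real.logb 2 16 = 4 := by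
            rw [show (16 : ℝ) = 2 ^ (4 : ℕ) by norm_num, Real.logb_pow]
            simp [Real.logb_self_eq_one]
          rw [this]
          push_cast
          ring
  -- final real arithmetic
  rw [hEcard]
  have hkey2' : ((T : ℝ) + 1) * n ≤ 16 * (Efin.card : ℝ) := by exact_mod_cast hkey2
  have h5 : (n : ℝ) * Real.logb 2 n ≤ (n : ℝ) * (4 * ((T : ℝ) + 1)) := by
    apply mul_le_mul_of_nonneg_left hlogb (by positivity)
  nlinarith [hkey2', h5]
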